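/- A matrix A ∈ R^{m×m} partitioned as A = [[A₁₁, A₁₂],[A₂₁, A₂₂]] with A₂₂ < 0 a scalar is diagonally stable if and only if there exists a positive diagonal matrix P ∈ R^{(m-1)×(m-1)} such that both A₁₁ᵀP + PA₁₁ < 0 and (A₁₁ − A₁₂A₂₁/A₂₂)ᵀP + P(A₁₁ − A₁₂A₂₁/A₂₂) < 0. -/

import Mathlib

open Matrix

/-- `M` is diagonally stable if there is a positive diagonal `Q` with
`MᵀQ + QM` negative definite. -/
def DiagStable {ι : Type*} [Fintype ι] [DecidableEq ι] (M : Matrix ι ι ℝ) : Prop :=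
  ∃ q : ι → ℝ, (∀ i, 0 < q i) ∧
    ∀ v : ι → ℝ, v ≠ 0 →
      v ⬝ᵥ ((Mᵀ * Matrix.diagonal q + Matrix.diagonal q * M).mulVec v) < 0


lemma quadForm_eq {ι : Type*} [Fintype ι] [DecidableEq ι] (M : Matrix ι ι ℝ) (q x : ι → ℝ) :
    x ⬝ᵥ ((Mᵀ * Matrix.diagonal q + Matrix.diagonal q * M).mulVec x)
      = 2 * ∑ i, q i * x i * (M.mulVec x i) := by
  rw [add_mulVec, dotProduct_add, ← mulVec_mulVec, ← mulVec_mulVec,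
    dotProduct_mulVec, vecMul_transpose]
  have h2 : (M.mulVec x) ⬝ᵥ (Matrix.diagonal q).mulVec x = ∑ i, q i * x i * (M.mulVec x i) := by
    simp only [dotProduct, mulVec_diagonal]
    exact Finset.sum_congr rfl (fun i _ => by ring)
  have h3 : x ⬝ᵥ (Matrix.diagonal q).mulVec (M.mulVec x) = ∑ i, q i * x i * (M.mulVec x i) := by
    simp only [dotProduct, mulVec_diagonal]
    exact Finset.sum_congr rfl (fun i _ => by ring)
  rw [h2, h3]; ring

lemma blockForm {n : ℕ} (A11 : Matrix (Fin n) (Fin n) ℝ) (a12 a21 : Fin n → ℝ) (a22 : ℝ)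
    (p v : Fin n → ℝ) (ρ t : ℝ) :
    (Sum.elim v (fun _ : Unit => t)) ⬝ᵥ
      (((Matrix.fromBlocks A11 (fun i _ => a12 i) (fun _ j => a21 j) (fun _ _ : Unit => a22))ᵀ *
          Matrix.diagonal (Sum.elim p (fun _ : Unit => ρ)) +
        Matrix.diagonal (Sum.elim p (fun _ : Unit => ρ)) *
          (Matrix.fromBlocks A11 (fun i _ => a12 i) (fun _ j => a21 j) (fun _ _ : Unit => a22))).mulVec
        (Sum.elim v (fun _ : Unit => t)))
      = v ⬝ᵥ ((A11ᵀ * Matrix.diagonal p + Matrix.diagonal p * A11).mulVec v)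
        + 2 * t * (∑ i, p i * a12 i * v i) + 2 * ρ * t * (a21 ⬝ᵥ v) + 2 * ρ * a22 * t ^ 2 := by
  rw [quadForm_eq, quadForm_eq]
  erw [fromBlocks_mulVec]
  simp only [Fintype.sum_sum_type, Finset.univ_unique, Finset.sum_singleton,
    Sum.elim_inl, Sum.elim_inr, Pi.add_apply]
  have hcol : ∀ i, ((fun i (_ : Unit) => a12 i) *ᵥ ((Sum.elim v (fun _ : Unit => t)) ∘ Sum.inr)) i
      = a12 i * t := by
    intro i; simp [mulVec, dotProduct]
  have hrow : ∀ u : Unit, ((fun (_ : Unit) j => a21 j) *ᵥ ((Sum.elim v (fun _ : Unit => t)) ∘ Sum.inl)) u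
      = a21 ⬝ᵥ v := by
    intro u; simp [mulVec, dotProduct]
  simp only [hcol, hrow]
  have hd : ((fun (_ _ : Unit) => a22) *ᵥ ((Sum.elim v (fun _ : Unit => t)) ∘ Sum.inr)) default = a22 * t := by
    simp [mulVec, dotProduct]
  have hl : (Sum.elim v (fun _ : Unit => t)) ∘ Sum.inl = v := rfl
  rw [hd, hl]
  rw [show ∀ (f g : Fin n → ℝ), (∑ x, p x * v x * (f x + g x * t)) = (∑ x, p x * v x * f x) + t * ∑ x, p x * g x * v x from ?_]
  · ring
  · intro f g
    rw [Finset.mul_sum, ← Finset.sum_add_distrib]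
    exact Finset.sum_congr rfl (fun i _ => by ring)

lemma schurForm {n : ℕ} (A11 : Matrix (Fin n) (Fin n) ℝ) (a12 a21 : Fin n → ℝ) (a22 : ℝ)
    (p v : Fin n → ℝ) :
    v ⬝ᵥ (((A11 - a22⁻¹ • Matrix.vecMulVec a12 a21)ᵀ * Matrix.diagonal p +
        Matrix.diagonal p * (A11 - a22⁻¹ • Matrix.vecMulVec a12 a21)).mulVec v)
      = v ⬝ᵥ ((A11ᵀ * Matrix.diagonal p + Matrix.diagonal p * A11).mulVec v)
        - 2 * a22⁻¹ * (∑ i, p i * a12 i * v i) * (a21 ⬝ᵥ v) := by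
  rw [quadForm_eq, quadForm_eq]
  have h : ∀ i, ((A11 - a22⁻¹ • Matrix.vecMulVec a12 a21) *ᵥ v) i
      = (A11 *ᵥ v) i - a22⁻¹ * a12 i * (a21 ⬝ᵥ v) := by
    intro i
    simp only [sub_mulVec, Pi.sub_apply, smul_mulVec, Pi.smul_apply, smul_eq_mul]
    congr 1
    simp [mulVec, dotProduct, vecMulVec, Finset.mul_sum]
    exact Finset.sum_congr rfl (fun j _ => by ring)
  simp only [h]
  rw [show (∑ i, p i * v i * ((A11 *ᵥ v) i - a22⁻¹ * a12 i * (a21 ⬝ᵥ v)))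
      = (∑ i, p i * v i * (A11 *ᵥ v) i) - a22⁻¹ * (∑ i, p i * a12 i * v i) * (a21 ⬝ᵥ v) from ?_]
  · ring
  · rw [Finset.mul_sum, Finset.sum_mul, ← Finset.sum_sub_distrib]
    exact Finset.sum_congr rfl (fun i _ => by ring)


-- Cauchy–Schwarz for a nonneg symmetric bilinear form given by a matrix
lemma csN {n : ℕ} (N : Matrix (Fin n) (Fin n) ℝ) (hsym : Nᵀ = N)
    (hnn : ∀ v : Fin n → ℝ, 0 ≤ v ⬝ᵥ N.mulVec v) (x y : Fin n → ℝ) :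
    (x ⬝ᵥ N.mulVec y)^2 ≤ (x ⬝ᵥ N.mulVec x) * (y ⬝ᵥ N.mulVec y) := by
  have hswap : ∀ a b : Fin n → ℝ, a ⬝ᵥ N.mulVec b = b ⬝ᵥ N.mulVec a := by
    intro a b
    conv_lhs => rw [← hsym]
    rw [mulVec_transpose, dotProduct_comm, ← dotProduct_mulVec]
  have key : ∀ t : ℝ, 0 ≤ (y ⬝ᵥ N.mulVec y) * (t*t) + (2 * (x ⬝ᵥ N.mulVec y)) * t
      + (x ⬝ᵥ N.mulVec x) := by
    intro t
    have h := hnn (x + t • y)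
    rw [mulVec_add, mulVec_smul, dotProduct_add, add_dotProduct, add_dotProduct,
      dotProduct_smul, smul_dotProduct, smul_dotProduct, dotProduct_smul] at h
    rw [hswap y x] at h
    simp only [smul_eq_mul] at h
    nlinarith [h]
  have hd := discrim_le_zero key
  rw [discrim] at hd
  nlinarith [hd]

lemma exists_rho {n : ℕ} (N : Matrix (Fin n) (Fin n) ℝ) (hsym : Nᵀ = N)
    (hpos : ∀ v : Fin n → ℝ, v ≠ 0 → 0 < v ⬝ᵥ N.mulVec v)
    (b c : Fin n → ℝ) (c0 : ℝ) (hc0 : 0 < c0)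
    (hcond : ∀ v : Fin n → ℝ, v ≠ 0 → 2 * (b ⬝ᵥ v) * (c ⬝ᵥ v) < c0 * (v ⬝ᵥ N.mulVec v)) :
    ∃ ρ : ℝ, 0 < ρ ∧ ∀ v : Fin n → ℝ, v ≠ 0 →
      ((b ⬝ᵥ v) + ρ * (c ⬝ᵥ v))^2 < 2 * ρ * c0 * (v ⬝ᵥ N.mulVec v) := by
  have hswap : ∀ a b : Fin n → ℝ, a ⬝ᵥ N.mulVec b = b ⬝ᵥ N.mulVec a := by
    intro a b
    conv_lhs => rw [← hsym]
    rw [mulVec_transpose, dotProduct_comm, ← dotProduct_mulVec]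
  have hnn : ∀ v : Fin n → ℝ, 0 ≤ v ⬝ᵥ N.mulVec v := by
    intro v
    by_cases hv : v = 0
    · simp [hv]
    · exact (hpos v hv).le
  have bilin : ∀ (s t : ℝ) (x y : Fin n → ℝ),
      (s • x + t • y) ⬝ᵥ N.mulVec (s • x + t • y)
        = s^2*(x ⬝ᵥ N.mulVec x) + 2*s*t*(x ⬝ᵥ N.mulVec y) + t^2*(y ⬝ᵥ N.mulVec y) := by
    intro s t x y
    simp only [mulVec_add, mulVec_smul, dotProduct_add, add_dotProduct,
      dotProduct_smul, smul_dotProduct, smul_eq_mul, hswap y x]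
    ring
  have blin : ∀ (s t : ℝ) (x y z : Fin n → ℝ),
      z ⬝ᵥ N.mulVec (s • x + t • y) = s*(z ⬝ᵥ N.mulVec x) + t*(z ⬝ᵥ N.mulVec y) := by
    intro s t x y z
    simp only [mulVec_add, mulVec_smul, dotProduct_add, dotProduct_smul, smul_eq_mul]
  -- surjectivity of N
  have hinj : Function.Injective N.mulVecLin := by
    rw [← LinearMap.ker_eq_bot, LinearMap.ker_eq_bot']
    intro x hx
    by_contra hx0
    have := hpos x hx0
    rw [show N.mulVec x = 0 from hx] at this
    simp at this
  have hsurj : Function.Surjective N.mulVecLin :=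
    LinearMap.surjective_of_injective hinj
  obtain ⟨bh, hbh⟩ := hsurj b
  obtain ⟨ch, hch⟩ := hsurj c
  have hbv : ∀ v, b ⬝ᵥ v = bh ⬝ᵥ N.mulVec v := by
    intro v
    rw [← hbh]
    show (N.mulVec bh) ⬝ᵥ v = _
    rw [dotProduct_comm, hswap]
  have hcv : ∀ v, c ⬝ᵥ v = ch ⬝ᵥ N.mulVec v := by
    intro v
    rw [← hch]
    show (N.mulVec ch) ⬝ᵥ v = _
    rw [dotProduct_comm, hswap]
  set B0 := bh ⬝ᵥ N.mulVec bh with hB0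
  set C0 := bh ⬝ᵥ N.mulVec ch with hC0
  set D0 := ch ⬝ᵥ N.mulVec ch with hD0
  have hB0nn : 0 ≤ B0 := hnn bh
  have hD0nn : 0 ≤ D0 := hnn ch
  have hCS : C0^2 ≤ B0 * D0 := csN N hsym hnn bh ch
  -- reduce to finding ρ with B0 + 2ρC0 + ρ²D0 < 2ρc0
  have main : ∀ ρ : ℝ, 0 < ρ → B0 + 2*ρ*C0 + ρ^2*D0 < 2*ρ*c0 →
      ∀ v : Fin n → ℝ, v ≠ 0 →
      ((b ⬝ᵥ v) + ρ * (c ⬝ᵥ v))^2 < 2 * ρ * c0 * (v ⬝ᵥ N.mulVec v) := by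
    intro ρ hρ hval v hv
    have hu : (b ⬝ᵥ v) + ρ * (c ⬝ᵥ v) = ((1:ℝ) • bh + ρ • ch) ⬝ᵥ N.mulVec v := by
      rw [hbv, hcv, add_dotProduct, smul_dotProduct, smul_dotProduct, smul_eq_mul,
        smul_eq_mul, one_mul]
    have huu : ((1:ℝ) • bh + ρ • ch) ⬝ᵥ N.mulVec ((1:ℝ) • bh + ρ • ch)
        = B0 + 2*ρ*C0 + ρ^2*D0 := by
      rw [bilin, ← hB0, ← hC0, ← hD0]; ring
    have hcs2 := csN N hsym hnn ((1:ℝ) • bh + ρ • ch) v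
    rw [huu] at hcs2
    rw [hu]
    have hvpos := hpos v hv
    nlinarith [hcs2, hvpos, hval]
  -- now find such ρ
  by_cases hD : D0 = 0
  · have hC : C0 = 0 := by nlinarith [hCS, sq_nonneg C0]
    refine ⟨(B0+1)/(2*c0), by positivity, main _ (by positivity) ?_⟩
    rw [hD, hC]
    have : 2*((B0+1)/(2*c0))*c0 = B0+1 := by field_simp
    nlinarith [this]
  · have hD0pos : 0 < D0 := lt_of_le_of_ne hD0nn (Ne.symm hD)
    by_cases hB : B0 = 0
    · have hC : C0 = 0 := by nlinarith [hCS, sq_nonneg C0]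
      have hq : 0 < c0/D0 := div_pos hc0 hD0pos
      refine ⟨c0/D0, hq, main _ hq ?_⟩
      rw [hB, hC]
      have h1 : (c0/D0)*D0 = c0 := div_mul_cancel₀ c0 (ne_of_gt hD0pos)
      nlinarith [h1, hq, mul_pos hq hc0]
    · have hB0pos : 0 < B0 := lt_of_le_of_ne hB0nn (Ne.symm hB)
      set rb := Real.sqrt B0 with hrb
      set rd := Real.sqrt D0 with hrd
      have hrbpos : 0 < rb := Real.sqrt_pos.mpr hB0pos
      have hrdpos : 0 < rd := Real.sqrt_pos.mpr hD0pos
      have hrb2 : rb^2 = B0 := Real.sq_sqrt hB0nn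
      have hrd2 : rd^2 = D0 := Real.sq_sqrt hD0nn
      -- key : C0 + rb*rd < c0
      have key : C0 + rb*rd < c0 := by
        rcases le_or_gt (C0 + rb*rd) 0 with hsgn | hsgn
        · linarith
        · set w := rd • bh + rb • ch with hw
          have hww : w ⬝ᵥ N.mulVec w = 2*(rb*rd)*(rb*rd + C0) := by
            rw [hw, bilin, ← hB0, ← hC0, ← hD0, ← hrb2, ← hrd2]
            ring
          have hwne : w ≠ 0 := by
            intro h0
            have h1 : w ⬝ᵥ N.mulVec w = 0 := by rw [h0]; simp
            rw [hww] at h1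
            nlinarith [mul_pos hrbpos hrdpos, hsgn, h1]
          have hc := hcond w hwne
          have hbw : b ⬝ᵥ w = rd * B0 + rb * C0 := by
            rw [hbv, hw, blin, ← hB0, ← hC0]
          have hcw : c ⬝ᵥ w = rd * C0 + rb * D0 := by
            rw [hcv, hw, blin, hswap ch bh, ← hC0, ← hD0]
          rw [hbw, hcw, hww] at hc
          have hid : 2*(rd*B0+rb*C0)*(rd*C0+rb*D0) = 2*(rb*rd)*(rb*rd+C0)^2 := by
            rw [← hrb2, ← hrd2]; ring
          rw [hid] at hc
          nlinarith [hc, mul_pos (mul_pos hrbpos hrdpos) hsgn]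
      have hρ : 0 < rb/rd := div_pos hrbpos hrdpos
      refine ⟨rb/rd, hρ, main _ hρ ?_⟩
      have heq : B0 + 2*(rb/rd)*C0 + (rb/rd)^2*D0 = 2*(rb/rd)*(C0 + rb*rd) := by
        rw [← hrb2, ← hrd2]
        field_simp
        ring
      rw [heq]
      exact mul_lt_mul_of_pos_left key (by linarith)


/-- Shorten–Narendra: a matrix `[[A₁₁, A₁₂],[A₂₁, A₂₂]]` with scalar `A₂₂ < 0` is
diagonally stable iff `A₁₁` and the Schur-type matrix `A₁₁ − A₁₂A₂₁/A₂₂` have a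
common diagonal Lyapunov function. -/
theorem diagStable_iff_common_diagonal_lyapunov {n : ℕ}
    (A11 : Matrix (Fin n) (Fin n) ℝ) (a12 a21 : Fin n → ℝ) (a22 : ℝ) (h22 : a22 < 0) :
    DiagStable (Matrix.fromBlocks A11 (fun i _ => a12 i) (fun _ j => a21 j)
        (fun _ _ : Unit => a22)) ↔
      ∃ p : Fin n → ℝ, (∀ i, 0 < p i) ∧
        (∀ v : Fin n → ℝ, v ≠ 0 →
          v ⬝ᵥ ((A11ᵀ * Matrix.diagonal p + Matrix.diagonal p * A11).mulVec v) < 0) ∧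
        (∀ v : Fin n → ℝ, v ≠ 0 →
          v ⬝ᵥ (((A11 - a22⁻¹ • Matrix.vecMulVec a12 a21)ᵀ * Matrix.diagonal p +
            Matrix.diagonal p *
              (A11 - a22⁻¹ • Matrix.vecMulVec a12 a21)).mulVec v) < 0) := by
  have ha22ne : a22 ≠ 0 := ne_of_lt h22
  constructor
  · rintro ⟨q, hq, hneg⟩
    set p : Fin n → ℝ := fun i => q (Sum.inl i) with hp
    set ρ : ℝ := q (Sum.inr ()) with hρdef
    have hρ : 0 < ρ := hq _
    have hqeq : q = Sum.elim p (fun _ : Unit => ρ) := by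
      funext i
      rcases i with i | ⟨⟩ <;> rfl
    refine ⟨p, fun i => hq _, ?_, ?_⟩
    · intro v hv
      have hx : (Sum.elim v (fun _ : Unit => (0:ℝ))) ≠ 0 := by
        intro h0
        apply hv
        funext i
        exact congrFun h0 (Sum.inl i)
      have h := hneg _ hx
      rw [hqeq, blockForm] at h
      simpa using h
    · intro v hv
      set α := ∑ i, p i * a12 i * v i with hα
      set β := a21 ⬝ᵥ v with hβ
      set t := (α + ρ*β)/(2*ρ*(-a22)) with htdef
      have hκ : 0 < 2*ρ*(-a22) := mul_pos (by linarith) (neg_pos.mpr h22)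
      have ht : t * (2*ρ*(-a22)) = α + ρ*β := div_mul_cancel₀ _ (ne_of_gt hκ)
      have hx : (Sum.elim v (fun _ : Unit => t)) ≠ 0 := by
        intro h0
        apply hv
        funext i
        exact congrFun h0 (Sum.inl i)
      have h := hneg _ hx
      rw [hqeq, blockForm] at h
      set Mp := v ⬝ᵥ ((A11ᵀ * Matrix.diagonal p + Matrix.diagonal p * A11).mulVec v) with hMp
      rw [schurForm]
      rw [← hMp, ← hα, ← hβ]
      have hinv : a22⁻¹ * a22 = 1 := inv_mul_cancel₀ ha22ne
      have hid : (2*ρ*(-a22))*(Mp + 2*t*α + 2*ρ*t*β + 2*ρ*a22*t^2)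
          = (2*ρ*(-a22))*Mp + (α+ρ*β)^2 := by
        linear_combination ((α + ρ*β) - t*(2*ρ*(-a22))) * ht
      have hF3 : (2*ρ*(-a22))*Mp + (α+ρ*β)^2 < 0 := by
        rw [← hid]
        exact mul_neg_of_pos_of_neg hκ h
      have h4 : (2*ρ*(-a22))*(Mp - 2*a22⁻¹*α*β) < 0 := by
        have he : (2*ρ*(-a22))*(Mp - 2*a22⁻¹*α*β)
            = (2*ρ*(-a22))*Mp + 4*ρ*(a22⁻¹*a22)*α*β := by ring
        rw [he, hinv]
        nlinarith [hF3, sq_nonneg (α - ρ*β)]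
      nlinarith [h4, hκ]
  · rintro ⟨p, hp, h1, h2⟩
    set S := A11ᵀ * Matrix.diagonal p + Matrix.diagonal p * A11 with hS
    set N := -S with hN
    have hsym : Nᵀ = N := by
      rw [hN, hS]
      simp [Matrix.transpose_add, Matrix.transpose_mul, Matrix.transpose_neg,
        Matrix.diagonal_transpose]
      rw [add_comm]
    have hNv : ∀ v : Fin n → ℝ, v ⬝ᵥ N.mulVec v = -(v ⬝ᵥ S.mulVec v) := by
      intro v
      rw [hN, neg_mulVec, dotProduct_neg]
    have hpos : ∀ v : Fin n → ℝ, v ≠ 0 → 0 < v ⬝ᵥ N.mulVec v := by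
      intro v hv
      rw [hNv]
      linarith [h1 v hv]
    set b : Fin n → ℝ := fun i => p i * a12 i with hb
    have hbdot : ∀ v : Fin n → ℝ, b ⬝ᵥ v = ∑ i, p i * a12 i * v i := by
      intro v; rfl
    have hcond : ∀ v : Fin n → ℝ, v ≠ 0 →
        2 * (b ⬝ᵥ v) * (a21 ⬝ᵥ v) < (-a22) * (v ⬝ᵥ N.mulVec v) := by
      intro v hv
      have h := h2 v hv
      rw [schurForm] at h
      rw [hNv, hbdot]
      have hinv : a22⁻¹ * a22 = 1 := inv_mul_cancel₀ ha22ne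
      set α := ∑ i, p i * a12 i * v i
      set β := a21 ⬝ᵥ v
      set Mp := v ⬝ᵥ (S.mulVec v) with hMp
      have h' : Mp - 2*a22⁻¹*α*β < 0 := h
      have h5 : (-a22) * (Mp - 2*a22⁻¹*α*β) < 0 := mul_neg_of_pos_of_neg (by linarith) h'
      have he : (-a22) * (Mp - 2*a22⁻¹*α*β) = (-a22)*Mp + 2*(a22⁻¹*a22)*α*β := by ring
      rw [he, hinv] at h5
      nlinarith [h5]
    obtain ⟨ρ, hρ, hkey⟩ := exists_rho N hsym hpos b a21 (-a22) (by linarith) hcond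
    refine ⟨Sum.elim p (fun _ : Unit => ρ), ?_, ?_⟩
    · rintro (i | ⟨⟩)
      · exact hp i
      · exact hρ
    · intro x hx
      set v : Fin n → ℝ := fun i => x (Sum.inl i) with hv
      set t : ℝ := x (Sum.inr ()) with ht
      have hxeq : x = Sum.elim v (fun _ : Unit => t) := by
        funext i
        rcases i with i | ⟨⟩ <;> rfl
      rw [hxeq, blockForm]
      set α := ∑ i, p i * a12 i * v i with hα
      set β := a21 ⬝ᵥ v with hβ
      set Mp := v ⬝ᵥ (S.mulVec v) with hMp
      by_cases hv0 : v = 0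
      · have htne : t ≠ 0 := by
          intro h0
          apply hx
          rw [hxeq, hv0, h0]
          funext i
          rcases i with i | ⟨⟩ <;> simp
        have hα0 : α = 0 := by
          rw [hα, hv0]
          simp
        have hβ0 : β = 0 := by
          rw [hβ, hv0]
          simp
        have hM0 : Mp = 0 := by
          rw [hMp, hv0]
          simp
        rw [hα0, hβ0, hM0]
        have : 0 < t^2 := by positivity
        nlinarith [this, mul_pos hρ (neg_pos.mpr h22)]
      · have hk := hkey v hv0
        rw [hbdot, hNv] at hk
        nlinarith [hk, sq_nonneg ((α + ρ*β) - (2*ρ*(-a22))*t),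
          mul_pos hρ (neg_pos.mpr h22)]
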